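/- Let p be a prime, and let a, b, n be integers with p ∤ b and n ≥ 1. If p^i divides n!, then p^i divides the product (a+b)(a+2b)⋯(a+nb). -/

import Mathlib

lemma ascPochhammer_eval_eq_prod (n : ℕ) (x : ℤ) :
    (ascPochhammer ℤ n).eval x = ∏ j ∈ Finset.range n, (x + j) := by
  induction n with
  | zero => simp
  | succ n ih =>
    rw [ascPochhammer_succ_right, Finset.prod_range_succ, ← ih]
    simp [mul_add]

lemma factorial_dvd_prod_range (n : ℕ) (x : ℤ) :
    (n.factorial : ℤ) ∣ ∏ j ∈ Finset.range n, (x + (j + 1)) := by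
  have : ∏ j ∈ Finset.range n, (x + ((j : ℤ) + 1)) =
      ∏ j ∈ Finset.range n, ((x + 1) + (j : ℤ)) :=
    Finset.prod_congr rfl (fun j _ => by ring)
  rw [this, ← ascPochhammer_eval_eq_prod]
  refine ⟨Ring.multichoose (x + 1) n, ?_⟩
  rw [← Polynomial.ascPochhammer_smeval_eq_eval,
    ← Ring.factorial_nsmul_multichoose_eq_ascPochhammer, nsmul_eq_mul]

/-- If `p` is prime, `p ∤ b`, and `p^i ∣ n!`, then `p^i` divides
`(a+b)(a+2b)⋯(a+nb)`. -/
theorem pow_dvd_arith_prog_product (p : ℕ) (hp : p.Prime) (a b : ℤ) (i n : ℕ)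
    (hb : ¬ (p : ℤ) ∣ b) (hn : 1 ≤ n) (h : (p : ℤ) ^ i ∣ (n.factorial : ℤ)) :
    (p : ℤ) ^ i ∣ ∏ j ∈ Finset.range n, (a + (j + 1 : ℕ) * b) := by
  have hN : ((p : ℤ) ^ i) = ((p ^ i : ℕ) : ℤ) := by push_cast; ring
  rw [hN, ← ZMod.intCast_zmod_eq_zero_iff_dvd]
  push_cast
  -- obtain an inverse of b mod p^i
  have hcop : IsCoprime ((p : ℤ) ^ i) b :=
    IsCoprime.pow_left (((Nat.prime_iff_prime_int.mp hp).coprime_iff_not_dvd.mpr hb))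
  obtain ⟨u, v, huv⟩ := hcop
  have hbv : (v : ZMod (p ^ i)) * (b : ZMod (p ^ i)) = 1 := by
    have := congrArg (fun x : ℤ => (x : ZMod (p ^ i))) huv
    push_cast at this
    rwa [← Nat.cast_pow, ZMod.natCast_self, mul_zero, zero_add] at this
  have hprod : ∏ j ∈ Finset.range n,
        ((a : ZMod (p ^ i)) + ((j : ZMod (p ^ i)) + 1) * b) =
      (b : ZMod (p ^ i)) ^ n *
        ∏ j ∈ Finset.range n, ((v : ZMod (p ^ i)) * a + ((j : ZMod (p ^ i)) + 1)) := by
    calc ∏ j ∈ Finset.range n, ((a : ZMod (p ^ i)) + ((j : ZMod (p ^ i)) + 1) * b)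
        = ∏ j ∈ Finset.range n,
            ((b : ZMod (p ^ i)) * ((v : ZMod (p ^ i)) * a + ((j : ZMod (p ^ i)) + 1))) :=
          Finset.prod_congr rfl fun j _ => by
            linear_combination (-(a : ZMod (p ^ i))) * hbv
      _ = _ := by rw [Finset.prod_mul_distrib, Finset.prod_const, Finset.card_range]
  rw [hprod]
  have hz : ∏ j ∈ Finset.range n, ((v : ZMod (p ^ i)) * a + ((j : ZMod (p ^ i)) + 1)) = 0 := by
    have hdvd : ((p ^ i : ℕ) : ℤ) ∣ ∏ j ∈ Finset.range n, (v * a + ((j : ℤ) + 1)) := by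
      rw [← hN]
      exact h.trans (factorial_dvd_prod_range n (v * a))
    have := (ZMod.intCast_zmod_eq_zero_iff_dvd _ (p ^ i)).mpr hdvd
    push_cast at this
    exact this
  rw [hz, mul_zero]
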